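/- Suppose the infimum of C(T) = ∫ ‖x − T(x)‖^p dα over transport maps T with T_♯α ∈ ⋃_F S_{F,L} is finite, the class of classifiers is compact, L is continuous, and bounded subsets of ⋃_F S_{F,L} (in W_p) are totally bounded. Assume moreover that for every target measure β in the W_p-closure of ⋃_F S_{F,L} there exists an optimal transport map from α to β whose cost equals W_p(α,β)^p. Then the infimum is attained: there exist T* and F* with T*_♯α ∈ S_{F*,L} and C(T*) equal to the infimum, and T* is an optimal transport map between α and T*_♯α. -/

import Mathlib

open MeasureTheory Filter
open scoped ProbabilityTheory
open scoped ENNReal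

/-- `W_p(α,β)^p`: infimum of `∫ ‖x - y‖^p dγ` over couplings `γ` of `α` and `β`. -/
noncomputable def WassersteinPow {d : ℕ} (p : ℝ)
    (α β : Measure (EuclideanSpace ℝ (Fin d))) : ℝ≥0∞ :=
  ⨅ (γ : Measure (EuclideanSpace ℝ (Fin d) × EuclideanSpace ℝ (Fin d)))
    (_ : γ.map Prod.fst = α ∧ γ.map Prod.snd = β),
      ∫⁻ z, ENNReal.ofReal (‖z.1 - z.2‖ ^ p) ∂γ

namespace WassersteinAux

variable {d : ℕ}

local notation "E" => EuclideanSpace ℝ (Fin d)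

lemma costMeasurable (p : ℝ) (hp : 0 ≤ p) :
    Measurable fun z : E × E => ENNReal.ofReal (‖z.1 - z.2‖ ^ p) :=
  ENNReal.measurable_ofReal.comp <|
    (Real.continuous_rpow_const hp).measurable.comp (measurable_fst.sub measurable_snd).norm

lemma isProb_of_fst {γ : Measure (E × E)} {α : Measure E} [IsProbabilityMeasure α]
    (h : γ.map Prod.fst = α) : IsProbabilityMeasure γ := by
  constructor
  have h1 : γ.map Prod.fst Set.univ = 1 := by rw [h]; exact measure_univ
  rwa [Measure.map_apply measurable_fst MeasurableSet.univ, Set.preimage_univ] at h1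

/-- The cost of the coupling induced by a transport map equals the transport cost. -/
lemma map_coupling_cost (p : ℝ) (hp : 0 ≤ p) (α : Measure E) {T : E → E}
    (hT : Measurable T) :
    (∫⁻ z, ENNReal.ofReal (‖z.1 - z.2‖ ^ p) ∂(α.map fun x => (x, T x)))
      = ∫⁻ x, ENNReal.ofReal (‖x - T x‖ ^ p) ∂α :=
  lintegral_map (costMeasurable p hp) (measurable_id.prodMk hT)

lemma map_coupling_fst (α : Measure E) {T : E → E} (hT : Measurable T) :
    (α.map fun x => (x, T x)).map Prod.fst = α := by
  have hmT : Measurable fun x : E => (x, T x) := measurable_id.prodMk hT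
  rw [Measure.map_map measurable_fst hmT]
  have h : (Prod.fst ∘ fun x : E => (x, T x)) = id := rfl
  rw [h, Measure.map_id]

lemma map_coupling_snd (α : Measure E) {T : E → E} (hT : Measurable T) :
    (α.map fun x => (x, T x)).map Prod.snd = α.map T := by
  have hmT : Measurable fun x : E => (x, T x) := measurable_id.prodMk hT
  rw [Measure.map_map measurable_snd hmT]
  rfl

/-- `W_p(α, T_♯α) ≤ C(T)`. -/
lemma wass_le_cost (p : ℝ) (hp : 0 ≤ p) (α : Measure E) {T : E → E}
    (hT : Measurable T) :
    WassersteinPow p α (α.map T) ≤ ∫⁻ x, ENNReal.ofReal (‖x - T x‖ ^ p) ∂α := by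
  refine le_trans (iInf₂_le (α.map fun x => (x, T x))
    ⟨map_coupling_fst α hT, map_coupling_snd α hT⟩) ?_
  exact le_of_eq (map_coupling_cost p hp α hT)

/-- Gluing two couplings: the `1/p`-power triangle inequality at the level of couplings. -/
lemma wass_rpow_triangle {p : ℝ} (hp : 1 ≤ p) (α mid β : Measure E) [IsProbabilityMeasure α]
    (γ₁ γ₂ : Measure (E × E))
    (h1f : γ₁.map Prod.fst = α) (h1s : γ₁.map Prod.snd = mid)
    (h2f : γ₂.map Prod.fst = mid) (h2s : γ₂.map Prod.snd = β) :
    WassersteinPow p α β ^ (1 / p) ≤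
      (∫⁻ z, ENNReal.ofReal (‖z.1 - z.2‖ ^ p) ∂γ₁) ^ (1 / p) +
      (∫⁻ z, ENNReal.ofReal (‖z.1 - z.2‖ ^ p) ∂γ₂) ^ (1 / p) := by
  have hp0 : (0:ℝ) < p := lt_of_lt_of_le one_pos hp
  haveI hγ₁p : IsProbabilityMeasure γ₁ := isProb_of_fst h1f
  haveI hμp : IsProbabilityMeasure mid := by
    rw [← h1s]; exact Measure.isProbabilityMeasure_map measurable_snd.aemeasurable
  haveI hγ₂p : IsProbabilityMeasure γ₂ := isProb_of_fst h2f
  -- disintegration of γ₂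
  set κ := γ₂.condKernel with hκdef
  have hdis : mid ⊗ₘ κ = γ₂ := by
    have h := γ₂.disintegrate γ₂.condKernel
    rwa [show γ₂.fst = mid from by rw [← h2f]; rfl] at h
  set κ' := κ.comap (Prod.snd : E × E → E) measurable_snd with hκ'def
  set η := γ₁ ⊗ₘ κ' with hηdef
  have hηfst : η.map Prod.fst = γ₁ := by
    have h := Measure.fst_compProd γ₁ κ'
    rwa [Measure.fst] at h
  have hmap2 : Measurable fun q : (E × E) × E => (q.1.2, q.2) :=
    measurable_fst.snd.prodMk measurable_snd
  have hkey : η.map (fun q : (E × E) × E => (q.1.2, q.2)) = mid ⊗ₘ κ := by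
    haveI : IsProbabilityMeasure (η.map (fun q : (E × E) × E => (q.1.2, q.2))) := by
      constructor
      rw [Measure.map_apply hmap2 MeasurableSet.univ, Set.preimage_univ, hηdef,
        Measure.compProd_apply_univ]
      exact measure_univ
    refine ext_of_generate_finite _ generateFrom_prod.symm isPiSystem_prod ?_ ?_
    · rintro s ⟨s₁, hs₁, s₂, hs₂, rfl⟩
      simp only [Set.mem_setOf_eq] at hs₁ hs₂
      rw [Measure.map_apply hmap2 (hs₁.prod hs₂)]
      have hpre : (fun q : (E × E) × E => (q.1.2, q.2)) ⁻¹' (s₁ ×ˢ s₂)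
          = ((Set.univ : Set E) ×ˢ s₁) ×ˢ s₂ := by
        ext q; simp [Set.mem_prod, and_comm]
      rw [hpre, hηdef, Measure.compProd_apply_prod (MeasurableSet.univ.prod hs₁) hs₂,
        Measure.compProd_apply_prod hs₁ hs₂]
      have hcoe : ∀ a : E × E, κ' a s₂ = κ a.2 s₂ := fun a => rfl
      simp_rw [hcoe]
      rw [← h1s, setLIntegral_map hs₁ (ProbabilityTheory.Kernel.measurable_coe κ hs₂) measurable_snd]
      have huniv : ((Set.univ : Set E) ×ˢ s₁ : Set (E × E)) = Prod.snd ⁻¹' s₁ := by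
        ext a; simp
      rw [huniv]
    · rw [Measure.map_apply hmap2 MeasurableSet.univ, Set.preimage_univ, hηdef,
        Measure.compProd_apply_univ, Measure.compProd_apply_univ]
      exact (measure_univ).trans (measure_univ).symm
  have hsnd : η.map (fun q : (E × E) × E => (q.1.2, q.2)) = γ₂ := by rw [hkey, hdis]
  -- the glued coupling
  set g : (E × E) × E → E × E := fun q => (q.1.1, q.2) with hgdef
  have hgm : Measurable g := measurable_fst.fst.prodMk measurable_snd
  have hγf : (η.map g).map Prod.fst = α := by
    rw [Measure.map_map measurable_fst hgm]
    have h : (Prod.fst ∘ g : (E × E) × E → E)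
        = Prod.fst ∘ (Prod.fst : (E × E) × E → E × E) := rfl
    rw [h, ← Measure.map_map measurable_fst measurable_fst, hηfst, h1f]
  have hγs : (η.map g).map Prod.snd = β := by
    rw [Measure.map_map measurable_snd hgm]
    have h : (Prod.snd ∘ g : (E × E) × E → E)
        = Prod.snd ∘ (fun q : (E × E) × E => (q.1.2, q.2)) := rfl
    rw [h, ← Measure.map_map measurable_snd hmap2, hsnd, h2s]
  have hW : WassersteinPow p α β ≤ ∫⁻ z, ENNReal.ofReal (‖z.1 - z.2‖ ^ p) ∂(η.map g) :=
    iInf₂_le _ ⟨hγf, hγs⟩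
  -- cost estimate via Minkowski
  set A : (E × E) × E → ℝ≥0∞ := fun q => ENNReal.ofReal ‖q.1.1 - q.1.2‖ with hAdef
  set B : (E × E) × E → ℝ≥0∞ := fun q => ENNReal.ofReal ‖q.1.2 - q.2‖ with hBdef
  have hAm : Measurable A :=
    ENNReal.measurable_ofReal.comp (measurable_fst.fst.sub measurable_fst.snd).norm
  have hBm : Measurable B :=
    ENNReal.measurable_ofReal.comp (measurable_fst.snd.sub measurable_snd).norm
  have hcost : ∫⁻ z, ENNReal.ofReal (‖z.1 - z.2‖ ^ p) ∂(η.map g)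
      ≤ ∫⁻ q, (A + B) q ^ p ∂η := by
    rw [lintegral_map (costMeasurable p hp0.le) hgm]
    refine lintegral_mono fun q => ?_
    have h1 : ‖q.1.1 - q.2‖ ≤ ‖q.1.1 - q.1.2‖ + ‖q.1.2 - q.2‖ :=
      norm_sub_le_norm_sub_add_norm_sub _ _ _
    calc ENNReal.ofReal (‖(g q).1 - (g q).2‖ ^ p)
        = ENNReal.ofReal ‖q.1.1 - q.2‖ ^ p :=
          (ENNReal.ofReal_rpow_of_nonneg (norm_nonneg _) hp0.le).symm
      _ ≤ (A + B) q ^ p := by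
          refine ENNReal.rpow_le_rpow ?_ hp0.le
          have : (A + B) q = ENNReal.ofReal (‖q.1.1 - q.1.2‖ + ‖q.1.2 - q.2‖) := by
            simp [hAdef, hBdef, ENNReal.ofReal_add (norm_nonneg _) (norm_nonneg _)]
          rw [this]
          exact ENNReal.ofReal_le_ofReal h1
  have hmink := ENNReal.lintegral_Lp_add_le (μ := η) hAm.aemeasurable hBm.aemeasurable hp
  have hIA : ∫⁻ q, A q ^ p ∂η = ∫⁻ z, ENNReal.ofReal (‖z.1 - z.2‖ ^ p) ∂γ₁ := by
    rw [← hηfst, lintegral_map (costMeasurable p hp0.le) measurable_fst]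
    exact lintegral_congr fun q =>
      ENNReal.ofReal_rpow_of_nonneg (norm_nonneg _) hp0.le
  have hIB : ∫⁻ q, B q ^ p ∂η = ∫⁻ z, ENNReal.ofReal (‖z.1 - z.2‖ ^ p) ∂γ₂ := by
    rw [← hsnd, lintegral_map (costMeasurable p hp0.le) hmap2]
    exact lintegral_congr fun q =>
      ENNReal.ofReal_rpow_of_nonneg (norm_nonneg _) hp0.le
  calc WassersteinPow p α β ^ (1 / p)
      ≤ (∫⁻ q, (A + B) q ^ p ∂η) ^ (1 / p) :=
        ENNReal.rpow_le_rpow (hW.trans hcost) (by positivity)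
    _ ≤ (∫⁻ q, A q ^ p ∂η) ^ (1 / p) + (∫⁻ q, B q ^ p ∂η) ^ (1 / p) := hmink
    _ = _ := by rw [hIA, hIB]

end WassersteinAux

open WassersteinAux in
/-- Existence of a minimizer for the least-action training problem: under the stated
compactness, continuity, total-boundedness and optimal-transport hypotheses, the
infimum of the transport cost over admissible `(T, F)` is attained, and the minimizer
`T*` is an optimal transport map between `α` and `T*_♯α`. -/
theorem stmt_3 {d : ℕ} (p : ℝ) (hp : 1 < p)
    (α : Measure (EuclideanSpace ℝ (Fin d))) [IsProbabilityMeasure α]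
    (hac : α ≪ volume)
    {𝓕 : Type*} [MetricSpace 𝓕] [CompactSpace 𝓕]
    (L : 𝓕 → Measure (EuclideanSpace ℝ (Fin d)) → ℝ)
    -- continuity of `L`, jointly in the classifier and (sequentially, w.r.t. `W_p`)
    -- in the measure:
    (hLcont : ∀ (Fi : ℕ → 𝓕) (F : 𝓕) (βi : ℕ → Measure (EuclideanSpace ℝ (Fin d)))
      (β : Measure (EuclideanSpace ℝ (Fin d))),
      Tendsto Fi atTop (nhds F) →
      Tendsto (fun i => WassersteinPow p (βi i) β) atTop (nhds 0) →
      Tendsto (fun i => L (Fi i) (βi i)) atTop (nhds (L F β)))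
    (m : ℝ≥0∞)
    (hm : m = ⨅ (T : EuclideanSpace ℝ (Fin d) → EuclideanSpace ℝ (Fin d))
      (_ : Measurable T ∧ ∃ F, L F (α.map T) = 0),
        ∫⁻ x, ENNReal.ofReal (‖x - T x‖ ^ p) ∂α)
    (hfin : m < ⊤)
    -- bounded subsets of `⋃_F S_{F,L}` are totally bounded (sequential form):
    (htb : ∀ (βi : ℕ → Measure (EuclideanSpace ℝ (Fin d))) (Fi : ℕ → 𝓕),
      (∀ i, L (Fi i) (βi i) = 0) →
      (∃ M : ℝ≥0∞, M < ⊤ ∧ ∀ i, WassersteinPow p α (βi i) ≤ M) →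
      ∃ (φ : ℕ → ℕ) (β : Measure (EuclideanSpace ℝ (Fin d))), StrictMono φ ∧
        Tendsto (fun i => WassersteinPow p (βi (φ i)) β) atTop (nhds 0))
    -- existence of optimal transport maps towards the `W_p`-closure of `⋃_F S_{F,L}`:
    (hot : ∀ β : Measure (EuclideanSpace ℝ (Fin d)),
      (∃ (βi : ℕ → Measure (EuclideanSpace ℝ (Fin d))) (Fi : ℕ → 𝓕),
        (∀ i, L (Fi i) (βi i) = 0) ∧
        Tendsto (fun i => WassersteinPow p (βi i) β) atTop (nhds 0)) →
      ∃ T : EuclideanSpace ℝ (Fin d) → EuclideanSpace ℝ (Fin d),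
        Measurable T ∧ α.map T = β ∧
        (∫⁻ x, ENNReal.ofReal (‖x - T x‖ ^ p) ∂α) = WassersteinPow p α β) :
    ∃ (Tstar : EuclideanSpace ℝ (Fin d) → EuclideanSpace ℝ (Fin d)) (Fstar : 𝓕),
      Measurable Tstar ∧ L Fstar (α.map Tstar) = 0 ∧
      (∫⁻ x, ENNReal.ofReal (‖x - Tstar x‖ ^ p) ∂α) = m ∧
      (∫⁻ x, ENNReal.ofReal (‖x - Tstar x‖ ^ p) ∂α) =
        WassersteinPow p α (α.map Tstar) := by
  have hp0 : (0:ℝ) < p := lt_trans one_pos hp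
  set E := EuclideanSpace ℝ (Fin d)
  set cost : (E → E) → ℝ≥0∞ :=
    fun T => ∫⁻ x, ENNReal.ofReal (‖x - T x‖ ^ p) ∂α with hcostdef
  set ε : ℕ → ℝ≥0∞ := fun n => (1 : ℝ≥0∞) / (n + 1) with hεdef
  have hε0 : ∀ n, ε n ≠ 0 := fun n => by
    simp [hεdef, ENNReal.div_eq_zero_iff]
  have hεtends : Tendsto ε atTop (nhds 0) := by
    have h := ENNReal.tendsto_inv_nat_nhds_zero
    have h2 : Tendsto (fun n : ℕ => n + 1) atTop atTop := tendsto_add_atTop_nat 1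
    have := h.comp h2
    refine this.congr fun n => ?_
    simp [hεdef, one_div]
  -- minimizing sequence
  have hseq : ∀ n : ℕ, ∃ T : E → E, (Measurable T ∧ ∃ F, L F (α.map T) = 0) ∧
      cost T < m + ε n := by
    intro n
    have hlt : (⨅ (T : E → E) (_ : Measurable T ∧ ∃ F, L F (α.map T) = 0), cost T)
        < m + ε n := by
      rw [← hm]; exact ENNReal.lt_add_right hfin.ne (hε0 n)
    obtain ⟨T, hT⟩ := iInf_lt_iff.mp hlt
    obtain ⟨hTP, hT'⟩ := iInf_lt_iff.mp hT
    exact ⟨T, hTP, hT'⟩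
  choose T hTP hTcost using hseq
  have hTm : ∀ n, Measurable (T n) := fun n => (hTP n).1
  choose F hLF using fun n => (hTP n).2
  set βs : ℕ → Measure E := fun n => α.map (T n) with hβs
  -- bound on W_p(α, βs n)
  have hWb : ∀ n, WassersteinPow p α (βs n) ≤ m + 1 := by
    intro n
    refine le_trans (wass_le_cost p hp0.le α (hTm n)) ?_
    refine le_trans (hTcost n).le ?_
    have hε1 : ε n ≤ 1 := by
      rw [hεdef]; exact ENNReal.div_le_of_le_mul (by simp)
    exact add_le_add_right hε1 m
  obtain ⟨φ, βlim, hφmono, hconv⟩ := htb βs F hLF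
    ⟨m + 1, by simpa [lt_top_iff_ne_top] using ENNReal.add_ne_top.mpr ⟨hfin.ne, ENNReal.one_ne_top⟩, hWb⟩
  -- compactness of the classifiers
  obtain ⟨Flim, -, φ', hφ'mono, hFconv⟩ :=
    isCompact_univ.tendsto_subseq (x := fun i => F (φ i)) (fun n => Set.mem_univ _)
  set ψ : ℕ → ℕ := fun i => φ (φ' i) with hψdef
  have hψconv : Tendsto (fun i => WassersteinPow p (βs (ψ i)) βlim) atTop (nhds 0) :=
    hconv.comp hφ'mono.tendsto_atTop
  have hLlim : L Flim βlim = 0 := by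
    have h1 := hLcont (fun i => F (ψ i)) Flim (fun i => βs (ψ i)) βlim hFconv hψconv
    have h2 : Tendsto (fun i => L (F (ψ i)) (βs (ψ i))) atTop (nhds 0) := by
      exact (tendsto_const_nhds : Tendsto (fun _ : ℕ => (0:ℝ)) atTop (nhds 0)).congr fun i => (hLF (ψ i)).symm
    exact tendsto_nhds_unique h1 h2
  -- optimal transport map to βlim
  obtain ⟨Tstar, hTstarm, hTstarmap, hTstaropt⟩ := hot βlim
    ⟨fun i => βs (ψ i), fun i => F (ψ i), fun i => hLF (ψ i), hψconv⟩
  have hLstar : L Flim (α.map Tstar) = 0 := by rw [hTstarmap]; exact hLlim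
  -- m ≤ cost Tstar
  have hmle : m ≤ cost Tstar := by
    rw [hm]
    exact iInf₂_le Tstar ⟨hTstarm, Flim, hLstar⟩
  -- cost Tstar ≤ m, via the triangle inequality
  have hle : WassersteinPow p α βlim ≤ m := by
    have hrp : WassersteinPow p α βlim ^ (1/p) ≤ m ^ (1/p) := by
      have hevsmall : ∀ᶠ i in atTop, WassersteinPow p (βs (ψ i)) βlim < 1 :=
        hψconv.eventually_lt_const one_pos
      have hbound : ∀ᶠ i in atTop, WassersteinPow p α βlim ^ (1/p) ≤
          (m + ε (ψ i)) ^ (1/p) + (WassersteinPow p (βs (ψ i)) βlim + ε i) ^ (1/p) := by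
        filter_upwards [hevsmall] with i hsmall
        -- near-optimal coupling of βs (ψ i) and βlim
        have hlt2 : WassersteinPow p (βs (ψ i)) βlim
            < WassersteinPow p (βs (ψ i)) βlim + ε i :=
          ENNReal.lt_add_right (lt_trans hsmall ENNReal.one_lt_top).ne (hε0 i)
        rw [WassersteinPow] at hlt2
        obtain ⟨γ₂, hγ₂⟩ := iInf_lt_iff.mp hlt2
        obtain ⟨⟨hγ₂f, hγ₂s⟩, hγ₂c⟩ := iInf_lt_iff.mp hγ₂
        have htri := wass_rpow_triangle hp.le α (βs (ψ i)) βlim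
          (α.map fun x => (x, T (ψ i) x)) γ₂
          (map_coupling_fst α (hTm (ψ i))) (map_coupling_snd α (hTm (ψ i))) hγ₂f hγ₂s
        refine le_trans htri ?_
        gcongr
        · rw [map_coupling_cost p hp0.le α (hTm (ψ i))]
          exact (hTcost (ψ i)).le
        · exact hγ₂c.le
      have htends : Tendsto (fun i => (m + ε (ψ i)) ^ (1/p)
          + (WassersteinPow p (βs (ψ i)) βlim + ε i) ^ (1/p)) atTop
          (nhds (m ^ (1/p) + 0)) := by
        have hψat : Tendsto ψ atTop atTop := (hφmono.comp hφ'mono).tendsto_atTop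
        have h1 : Tendsto (fun i => m + ε (ψ i)) atTop (nhds (m + 0)) :=
          tendsto_const_nhds.add (hεtends.comp hψat)
        rw [add_zero] at h1
        have h2 : Tendsto (fun i => WassersteinPow p (βs (ψ i)) βlim + ε i) atTop
            (nhds (0 + 0)) := hψconv.add hεtends
        rw [add_zero] at h2
        have hc : Continuous fun x : ℝ≥0∞ => x ^ (1/p) := ENNReal.continuous_rpow_const
        have h1' := (hc.tendsto m).comp h1
        have h2' := (hc.tendsto 0).comp h2
        rw [show (0:ℝ≥0∞) ^ (1/p) = 0 from ENNReal.zero_rpow_of_pos (by positivity)] at h2'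
        exact h1'.add h2'
      have := ge_of_tendsto htends hbound
      rwa [add_zero] at this
    have h2 := ENNReal.rpow_le_rpow hrp hp0.le
    rwa [← ENNReal.rpow_mul, ← ENNReal.rpow_mul, one_div,
      inv_mul_cancel₀ hp0.ne', ENNReal.rpow_one, ENNReal.rpow_one] at h2
  have hcostm : cost Tstar = m := by
    refine le_antisymm ?_ hmle
    calc cost Tstar = WassersteinPow p α βlim := hTstaropt
      _ ≤ m := hle
  refine ⟨Tstar, Flim, hTstarm, hLstar, hcostm, ?_⟩
  rw [hTstarmap]
  exact hTstaropt
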